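/- Let f : ZMod n → Bool (n ≥ 3) indicate for each node of a cycle whether position 1 is chosen. If for every i, at least two of f(i), f(i+1), f(i+2) are true, then the number of i with f(i) = true is at least 2⌊n/3⌋ + (n mod 3). -/
import Mathlib


open Finset

/-- If `f : ZMod n → Bool` (`n ≥ 3`) is such that among every three consecutive nodes
of the cycle at least two are marked `true`, then at least `2⌊n/3⌋ + (n mod 3)` nodes
are marked `true`. -/
theorem stmt_11 (n : ℕ) [NeZero n] (hn : 3 ≤ n) (f : ZMod n → Bool)
    (h : ∀ i : ZMod n,
      (f i = true ∧ f (i + 1) = true) ∨ (f i = true ∧ f (i + 2) = true) ∨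
      (f (i + 1) = true ∧ f (i + 2) = true)) :
    2 * (n / 3) + n % 3 ≤ (univ.filter (fun i : ZMod n => f i = true)).card := by
  classical
  have h1 : (1 : ZMod n) ≠ 0 := by
    have := (ZMod.natCast_eq_zero_iff 1 n).not.mpr
      (fun hd => absurd (Nat.le_of_dvd one_pos hd) (by omega))
    simpa using this
  have h2 : (2 : ZMod n) ≠ 0 := by
    have := (ZMod.natCast_eq_zero_iff 2 n).not.mpr
      (fun hd => absurd (Nat.le_of_dvd two_pos hd) (by omega))
    simpa using this
  have h12 : (1 : ZMod n) ≠ 2 := by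
    intro e
    exact h1 (by linear_combination -e)
  have hfalse : ∀ i : ZMod n, f i = false → f (i + 1) = true ∧ f (i + 2) = true := by
    intro i hi
    rcases h i with ⟨ha, hb⟩ | ⟨ha, hb⟩ | ⟨ha, hb⟩ <;> simp_all
  set F : Finset (ZMod n) := univ.filter (fun i => f i = false) with hF
  have hne : ∀ i ∈ F, ∀ j ∈ F, i ≠ j →
      j ≠ i + 1 ∧ j ≠ i + 2 ∧ i ≠ j + 1 ∧ i ≠ j + 2 := by
    intro i hi j hj hij
    simp only [hF, mem_filter, mem_univ, true_and] at hi hj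
    obtain ⟨hi1, hi2⟩ := hfalse i hi
    obtain ⟨hj1, hj2⟩ := hfalse j hj
    refine ⟨?_, ?_, ?_, ?_⟩ <;> intro e <;> subst e <;> simp_all
  have hdisj : ∀ i ∈ F, ∀ j ∈ F, i ≠ j →
      Disjoint ({i, i+1, i+2} : Finset (ZMod n)) {j, j+1, j+2} := by
    intro i hi j hj hij
    obtain ⟨e1, e2, e3, e4⟩ := hne i hi j hj hij
    rw [Finset.disjoint_left]
    intro x hx hx'
    simp only [mem_insert, mem_singleton] at hx hx'
    rcases hx with rfl | rfl | rfl <;> rcases hx' with e | e | e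
    · exact hij e
    · exact e3 (by linear_combination e)
    · exact e4 (by linear_combination e)
    · exact e1 (by linear_combination -e)
    · exact hij (by linear_combination e)
    · exact e3 (by linear_combination e)
    · exact e2 (by linear_combination -e)
    · exact e1 (by linear_combination -e)
    · exact hij (by linear_combination e)
  have hcard3 : ∀ i : ZMod n, ({i, i+1, i+2} : Finset (ZMod n)).card = 3 := by
    intro i
    have e1 : i ≠ i + 1 := fun e => h1 (by linear_combination -e)
    have e2 : i ≠ i + 2 := fun e => h2 (by linear_combination -e)
    have e3 : i + 1 ≠ i + 2 := fun e => h12 (by linear_combination e)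
    rw [card_insert_of_notMem (by simp [e1, e2]),
      card_insert_of_notMem (by simp [e3]), card_singleton]
  have key : 3 * F.card ≤ n := by
    calc 3 * F.card = ∑ i ∈ F, ({i, i+1, i+2} : Finset (ZMod n)).card := by
          simp [hcard3, mul_comm]
      _ = (F.biUnion fun i => ({i, i+1, i+2} : Finset (ZMod n))).card :=
          (Finset.card_biUnion hdisj).symm
      _ ≤ (univ : Finset (ZMod n)).card := card_le_card (subset_univ _)
      _ = n := by simp [Finset.card_univ, ZMod.card]
  have hsplit : (univ.filter (fun i : ZMod n => f i = true)).card + F.card = n := by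
    have := Finset.card_filter_add_card_filter_not
      (s := (univ : Finset (ZMod n))) (p := fun i : ZMod n => f i = true)
    simp only [Bool.not_eq_true, Finset.card_univ, ZMod.card] at this
    simpa [hF] using this
  omega
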